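/- Let d1, c, β, ε > 0 with ε < c/d1, and let φ : [0,∞) → ℝ be a bounded C² function with φ'(x) > 0 for all x ≥ 0, satisfying the differential inequality φ''(x) - ε φ'(x) + f(x) > 0 for all x > 0, where f : [0,∞) → ℝ satisfies 0 ≤ f(x) ≤ C e^{-βx} for some constant C > 0. Then there exists a constant C' > 0 such that φ'(x) ≤ C' e^{-βx} for all x > 0. -/

import Mathlib

/-- If `φ` is a bounded C² function on `[0,∞)` with `φ' > 0`, satisfying
`φ'' - ε φ' + f > 0` on `(0,∞)` with `0 ≤ f(x) ≤ C e^{-βx}` and `0 < ε < c/d1`,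
then `φ'(x) = O(e^{-βx})`. -/
theorem stmt0 (d1 c β ε C : ℝ) (φ φ' φ'' f : ℝ → ℝ)
    (hd1 : 0 < d1) (hc : 0 < c) (hβ : 0 < β) (hε : 0 < ε) (hεc : ε < c / d1)
    (hC : 0 < C)
    (hφd : ∀ x, 0 ≤ x → HasDerivAt φ (φ' x) x)
    (hφd2 : ∀ x, 0 ≤ x → HasDerivAt φ' (φ'' x) x)
    (hbdd : ∃ B, ∀ x, 0 ≤ x → |φ x| ≤ B)
    (hpos : ∀ x, 0 ≤ x → 0 < φ' x)
    (hineq : ∀ x, 0 < x → 0 < φ'' x - ε * φ' x + f x)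
    (hf : ∀ x, 0 ≤ x → 0 ≤ f x ∧ f x ≤ C * Real.exp (-β * x)) :
    ∃ C' > 0, ∀ x, 0 < x → φ' x ≤ C' * Real.exp (-β * x) := by
  obtain ⟨B, hB⟩ := hbdd
  set K : ℝ := C / (β + ε) with hKdef
  have hβε : 0 < β + ε := by linarith
  have hKpos : 0 < K := div_pos hC hβε
  have hKC : K * (β + ε) = C := div_mul_cancel₀ C hβε.ne'
  -- small values of φ' at arbitrarily large points
  have hsmall : ∀ δ > 0, ∀ M : ℝ, ∃ A, M ≤ A ∧ 0 ≤ A ∧ φ' A < δ := by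
    intro δ hδ M
    by_contra hcon
    push_neg at hcon
    set M' : ℝ := max M 0 with hM'
    have hM'0 : 0 ≤ M' := le_max_right _ _
    have hge : ∀ t, M' ≤ t → δ ≤ φ' t := by
      intro t ht
      exact hcon t (le_trans (le_max_left M 0) ht) (le_trans hM'0 ht)
    -- φ t - δ t is monotone on Ici M'
    have hmono : MonotoneOn (fun t => φ t - δ * t) (Set.Ici M') := by
      apply monotoneOn_of_deriv_nonneg (convex_Ici M')
      · apply ContinuousOn.sub
        · intro t ht
          exact ((hφd t (le_trans hM'0 ht)).continuousAt).continuousWithinAt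
        · exact (continuous_const.mul continuous_id).continuousOn
      · intro t ht
        rw [interior_Ici] at ht
        have h0t : 0 ≤ t := le_trans hM'0 (le_of_lt ht)
        exact ((hφd t h0t).sub ((hasDerivAt_id t).const_mul δ)).differentiableAt.differentiableWithinAt
      · intro t ht
        rw [interior_Ici] at ht
        have h0t : 0 ≤ t := le_trans hM'0 (le_of_lt ht)
        have hd : deriv (fun t => φ t - δ * t) t = φ' t - δ := by
          have := ((hφd t h0t).sub ((hasDerivAt_id t).const_mul δ))
          exact this.deriv.trans (by ring)
        rw [hd]
        have := hge t (le_of_lt ht)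
        linarith
    set T : ℝ := M' + (2 * B + 1) / δ with hT
    have hBpos : 0 ≤ B := le_trans (abs_nonneg _) (hB 0 le_rfl)
    have hTM : M' ≤ T := by
      have h0 : 0 ≤ (2 * B + 1) / δ := by positivity
      rw [hT]; linarith
    have := hmono (Set.self_mem_Ici) (Set.mem_Ici.mpr hTM) hTM
    simp only at this
    -- φ T ≥ φ M' + δ (T - M') = φ M' + 2B + 1
    have hδT : δ * (T - M') = 2 * B + 1 := by
      rw [hT]; field_simp; ring
    have h1 : φ M' + (2 * B + 1) ≤ φ T := by nlinarith
    have h2 : |φ M'| ≤ B := hB M' hM'0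
    have h3 : |φ T| ≤ B := hB T (le_trans hM'0 hTM)
    rw [abs_le] at h2 h3
    linarith [h2.1, h3.2]
  refine ⟨K, hKpos, ?_⟩
  intro x hx
  -- h t = φ' t * exp (-ε t) - K * exp (-(β+ε) t) is strictly monotone on Ici 0... on [x, A]
  set h : ℝ → ℝ := fun t => φ' t * Real.exp (-ε * t) - K * Real.exp (-(β + ε) * t) with hh
  have hder : ∀ t, 0 ≤ t → HasDerivAt h
      ((φ'' t - ε * φ' t) * Real.exp (-ε * t) + K * (β + ε) * Real.exp (-(β + ε) * t)) t := by
    intro t ht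
    have h1 : HasDerivAt (fun s => Real.exp (-ε * s)) (Real.exp (-ε * t) * (-ε)) t := by
      simpa using ((hasDerivAt_id t).const_mul (-ε)).exp
    have h2 : HasDerivAt (fun s => Real.exp (-(β + ε) * s)) (Real.exp (-(β + ε) * t) * (-(β + ε))) t := by
      simpa using ((hasDerivAt_id t).const_mul (-(β + ε))).exp
    have := ((hφd2 t ht).mul h1).sub (h2.const_mul K)
    exact this.congr_deriv (by ring)
  have key : ∀ A, x ≤ A → h x ≤ h A := by
    intro A hA
    rcases eq_or_lt_of_le hA with rfl | hA'
    · exact le_refl _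
    have hmono : StrictMonoOn h (Set.Icc x A) := by
      apply strictMonoOn_of_hasDerivWithinAt_pos (convex_Icc x A)
        (f' := fun t => (φ'' t - ε * φ' t) * Real.exp (-ε * t) + K * (β + ε) * Real.exp (-(β + ε) * t))
      · intro t ht
        exact ((hder t (le_trans hx.le ht.1)).continuousAt).continuousWithinAt
      · intro t ht
        rw [interior_Icc] at ht
        exact (hder t (le_trans hx.le ht.1.le)).hasDerivWithinAt
      · intro t ht
        rw [interior_Icc] at ht
        have htpos : 0 < t := lt_trans hx ht.1
        have h1 := hineq t htpos
        have h2 := (hf t htpos.le).2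
        have h3 : φ'' t - ε * φ' t > -(C * Real.exp (-β * t)) := by linarith
        have he : Real.exp (-β * t) * Real.exp (-ε * t) = Real.exp (-(β + ε) * t) := by
          rw [← Real.exp_add]; ring_nf
        have hexp : (0:ℝ) < Real.exp (-ε * t) := Real.exp_pos _
        have : (φ'' t - ε * φ' t) * Real.exp (-ε * t) > -(C * Real.exp (-β * t)) * Real.exp (-ε * t) := by
          exact mul_lt_mul_of_pos_right h3 hexp
        have h4 : -(C * Real.exp (-β * t)) * Real.exp (-ε * t) = -(C * Real.exp (-(β + ε) * t)) := by
          rw [← he]; ring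
        rw [h4] at this
        nlinarith [Real.exp_pos (-(β + ε) * t)]
    exact (hmono ⟨le_refl x, hA⟩ ⟨hA, le_refl A⟩ hA').le
  -- conclude g x ≤ K exp(-(β+ε) x)
  have hgoal : φ' x * Real.exp (-ε * x) ≤ K * Real.exp (-(β + ε) * x) := by
    rw [← sub_nonpos]
    by_contra hcon
    push_neg at hcon
    set δ : ℝ := h x with hδ
    obtain ⟨A, hAx, hA0, hAsmall⟩ := hsmall δ hcon (max x 0)
    have hxA : x ≤ A := le_trans (le_max_left _ _) hAx
    have := key A hxA
    have hhA : h A < δ := by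
      have h1 : φ' A * Real.exp (-ε * A) ≤ φ' A := by
        nth_rewrite 2 [← mul_one (φ' A)]
        apply mul_le_mul_of_nonneg_left _ (hpos A hA0).le
        exact Real.exp_le_one_iff.mpr (by nlinarith)
      have h2 : 0 < K * Real.exp (-(β + ε) * A) := by positivity
      calc h A ≤ φ' A * Real.exp (-ε * A) := by simp only [hh]; linarith
        _ ≤ φ' A := h1
        _ < δ := hAsmall
    exact absurd this (not_le.mpr hhA)
  -- φ' x ≤ K exp(-β x)
  have hexpx : (0:ℝ) < Real.exp (-ε * x) := Real.exp_pos _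
  have hfin : φ' x ≤ K * Real.exp (-(β + ε) * x) / Real.exp (-ε * x) := by
    rw [le_div_iff₀ hexpx]; exact hgoal
  calc φ' x ≤ K * Real.exp (-(β + ε) * x) / Real.exp (-ε * x) := hfin
    _ = K * Real.exp (-β * x) := by
        rw [mul_div_assoc, ← Real.exp_sub]
        ring_nf
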